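/- The first Adam step does not preserve timescale ratios: with zero initialization m₀ = v₀ = 0, decay rates β₁, β₂ ∈ [0,1), learning rate α > 0, ε > 0, and scalar gradient g̃₁ = κ·g with g ≠ 0 and κ > 0, the bias-corrected moments at t = 1 are m̂₁ = κ·g and v̂₁ = (κ·g)², so the magnitude of the Adam update α·m̂₁/(√(v̂₁)+ε) equals α·|κ·g|/(|κ·g| + ε). Consequently, for any 0 < κ₂ < κ₁, the ratio of first-step update magnitudes satisfies ( α·|κ₂·g|/(|κ₂·g|+ε) ) / ( α·|κ₁·g|/(|κ₁·g|+ε) ) > κ₂/κ₁, strictly exceeding the proportional ratio κ₂/κ₁ that SGD would produce. -/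

import Mathlib

/-- The first Adam step does not preserve timescale ratios: with zero initialization
`m₀ = v₀ = 0`, decay rates `β₁, β₂ ∈ [0,1)`, `α > 0`, `ε > 0`, and scalar gradient
`κ·g` with `g ≠ 0` and `κ > 0`, the bias-corrected moments at `t = 1` are
`m̂₁ = κ·g` and `v̂₁ = (κ·g)²`, the Adam update magnitude equals
`α·|κ·g|/(|κ·g| + ε)`, and for any `0 < κ₂ < κ₁` the ratio of first-step update
magnitudes strictly exceeds `κ₂/κ₁`. -/
theorem adam_first_step_not_proportional
    (α ε β₁ β₂ g : ℝ)
    (hα : 0 < α) (hε : 0 < ε)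
    (hβ₁ : β₁ ∈ Set.Ico (0 : ℝ) 1) (hβ₂ : β₂ ∈ Set.Ico (0 : ℝ) 1)
    (hg : g ≠ 0) :
    (∀ κ : ℝ, 0 < κ →
      (β₁ * 0 + (1 - β₁) * (κ * g)) / (1 - β₁ ^ 1) = κ * g ∧
      (β₂ * 0 + (1 - β₂) * (κ * g) ^ 2) / (1 - β₂ ^ 1) = (κ * g) ^ 2 ∧
      |α * (κ * g) / (Real.sqrt ((κ * g) ^ 2) + ε)| =
        α * |κ * g| / (|κ * g| + ε)) ∧
    (∀ κ₁ κ₂ : ℝ, 0 < κ₂ → κ₂ < κ₁ →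
      κ₂ / κ₁ <
        (α * |κ₂ * g| / (|κ₂ * g| + ε)) / (α * |κ₁ * g| / (|κ₁ * g| + ε))) := by
  have hb1 : (1 : ℝ) - β₁ ≠ 0 := by have := hβ₁.2; linarith
  have hb2 : (1 : ℝ) - β₂ ≠ 0 := by have := hβ₂.2; linarith
  constructor
  · intro κ hκ
    refine ⟨by field_simp; ring, by field_simp; ring, ?_⟩
    rw [Real.sqrt_sq_eq_abs, abs_div, abs_mul, abs_of_pos hα,
      abs_of_pos (by positivity : (0:ℝ) < |κ * g| + ε)]
  · intro κ₁ κ₂ h2 h12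
    have h1 : (0:ℝ) < κ₁ := h2.trans h12
    have hg' : (0:ℝ) < |g| := abs_pos.mpr hg
    have e1 : |κ₁ * g| = κ₁ * |g| := by rw [abs_mul, abs_of_pos h1]
    have e2 : |κ₂ * g| = κ₂ * |g| := by rw [abs_mul, abs_of_pos h2]
    rw [e1, e2]
    have d1 : κ₁ * |g| + ε ≠ 0 := by positivity
    have d2 : κ₂ * |g| + ε ≠ 0 := by positivity
    rw [div_lt_div_iff₀ h1 (by positivity)]
    field_simp
    nlinarith [mul_pos (mul_pos (mul_pos (mul_pos hα h1) h2) (mul_pos hg' hg')) (sub_pos.mpr h12)]
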